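/- Let S be a countable set and p, q probability mass functions on S that are both weighted averages (mixtures) of a family {r_y : y ∈ Y} of probability mass functions on S, i.e., p = Σ_y a(y) r_y and q = Σ_y b(y) r_y for probability weights a, b on a countable index set Y. Then the squared Hellinger distance between p and q is at most the supremum over pairs (y, y') of the squared Hellinger distance between r_y and r_{y'}. -/
import Mathlib

private lemma sqq_le {x y : ℝ} (hx : 0 ≤ x) (hy : 0 ≤ y) :
    Real.sqrt x * Real.sqrt y ≤ (x + y) / 2 := by
  nlinarith [sq_nonneg (Real.sqrt x - Real.sqrt y), Real.sq_sqrt hx, Real.sq_sqrt hy]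

/-- Expansion of the squared Hellinger distance. -/
private lemma expand_hell {S : Type*} (f g : S → ℝ)
    (hf0 : ∀ σ, 0 ≤ f σ) (hg0 : ∀ σ, 0 ≤ g σ)
    (hfs : Summable f) (hgs : Summable g) :
    Summable (fun σ => Real.sqrt (f σ) * Real.sqrt (g σ)) ∧
    ∑' σ, (Real.sqrt (f σ) - Real.sqrt (g σ)) ^ 2
      = (∑' σ, f σ) + (∑' σ, g σ) - 2 * ∑' σ, Real.sqrt (f σ) * Real.sqrt (g σ) := by
  have hmul : Summable (fun σ => Real.sqrt (f σ) * Real.sqrt (g σ)) :=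
    Summable.of_nonneg_of_le
      (fun σ => mul_nonneg (Real.sqrt_nonneg _) (Real.sqrt_nonneg _))
      (fun σ => sqq_le (hf0 σ) (hg0 σ)) ((hfs.add hgs).div_const 2)
  have hpt : ∀ σ, (Real.sqrt (f σ) - Real.sqrt (g σ)) ^ 2
      = f σ + g σ - 2 * (Real.sqrt (f σ) * Real.sqrt (g σ)) := by
    intro σ
    nlinarith [Real.sq_sqrt (hf0 σ), Real.sq_sqrt (hg0 σ)]
  refine ⟨hmul, ?_⟩
  calc ∑' σ, (Real.sqrt (f σ) - Real.sqrt (g σ)) ^ 2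
      = ∑' σ, (f σ + g σ - 2 * (Real.sqrt (f σ) * Real.sqrt (g σ))) := tsum_congr hpt
    _ = (∑' σ, (f σ + g σ)) - ∑' σ, 2 * (Real.sqrt (f σ) * Real.sqrt (g σ)) :=
        Summable.tsum_sub (hfs.add hgs) (hmul.mul_left 2)
    _ = _ := by rw [Summable.tsum_add hfs hgs, tsum_mul_left]

set_option maxHeartbeats 2000000 in
/-- If `p` and `q` are mixtures `p = Σ_y a(y) r_y`, `q = Σ_y b(y) r_y` of a family
of probability mass functions `r_y` on a countable set `S`, with probability weights
`a, b` on a countable set `Y`, then the squared Hellinger distance between `p` and `q`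
is at most the supremum over pairs `(y, y')` of the squared Hellinger distance between
`r_y` and `r_{y'}` (formulated as: any upper bound for the pairwise squared Hellinger
distances is an upper bound for `ρ²_H(p,q)`). -/
theorem stmt4 {S Y : Type*} [Countable S] [Countable Y]
    (r : Y → S → ℝ) (a b : Y → ℝ)
    (hr0 : ∀ y σ, 0 ≤ r y σ) (hrs : ∀ y, Summable (r y)) (hr1 : ∀ y, ∑' σ, r y σ = 1)
    (ha0 : ∀ y, 0 ≤ a y) (hb0 : ∀ y, 0 ≤ b y)
    (has : Summable a) (hbs : Summable b)
    (ha1 : ∑' y, a y = 1) (hb1 : ∑' y, b y = 1)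
    (p q : S → ℝ)
    (hp : ∀ σ, p σ = ∑' y, a y * r y σ) (hq : ∀ σ, q σ = ∑' y, b y * r y σ)
    (C : ℝ)
    (hC : ∀ y y' : Y, ∑' σ, (Real.sqrt (r y σ) - Real.sqrt (r y' σ)) ^ 2 ≤ C) :
    ∑' σ, (Real.sqrt (p σ) - Real.sqrt (q σ)) ^ 2 ≤ C := by
  classical
  -- basic bounds
  have hrle : ∀ y σ, r y σ ≤ 1 := fun y σ => by
    have := Summable.le_tsum (hrs y) σ (fun j _ => hr0 y j)
    rwa [hr1 y] at this
  have hsrle : ∀ y σ, Real.sqrt (r y σ) ≤ 1 := fun y σ =>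
    Real.sqrt_le_one.mpr (hrle y σ)
  have hp0 : ∀ σ, 0 ≤ p σ := fun σ => by
    rw [hp σ]; exact tsum_nonneg fun y => mul_nonneg (ha0 y) (hr0 y σ)
  have hq0 : ∀ σ, 0 ≤ q σ := fun σ => by
    rw [hq σ]; exact tsum_nonneg fun y => mul_nonneg (hb0 y) (hr0 y σ)
  -- summability of mixtures over Y × S
  have mix_core : ∀ (c : Y → ℝ), (∀ y, 0 ≤ c y) → Summable c → (∑' y, c y = 1) →
      Summable (fun z : Y × S => c z.1 * r z.1 z.2) := by
    intro c hc0 hcs _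
    refine (summable_prod_of_nonneg fun z => mul_nonneg (hc0 _) (hr0 _ _)).2
      ⟨fun y => (hrs y).mul_left (c y), ?_⟩
    refine hcs.congr fun y => ?_
    simp [tsum_mul_left, hr1 y]
  have hap := mix_core a ha0 has ha1
  have hbp := mix_core b hb0 hbs hb1
  -- p, q summable with total mass 1
  have mix_sum : ∀ (c : Y → ℝ), (∀ y, 0 ≤ c y) → Summable c → (∑' y, c y = 1) →
      Summable (fun σ => ∑' y, c y * r y σ) ∧ (∑' σ, ∑' y, c y * r y σ) = 1 := by
    intro c hc0 hcs hc1
    have hcp := mix_core c hc0 hcs hc1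
    have hs : Summable (fun σ => ∑' y, c y * r y σ) :=
      ((summable_prod_of_nonneg fun z : S × Y => mul_nonneg (hc0 _) (hr0 _ _)).1
        hcp.prod_symm).2
    refine ⟨hs, ?_⟩
    have hcomm := Summable.tsum_comm' (f := fun y σ => c y * r y σ) hcp
      (fun y => (hrs y).mul_left (c y))
      (fun σ => Summable.of_nonneg_of_le (fun y => mul_nonneg (hc0 y) (hr0 y σ))
        (fun y => mul_le_of_le_one_right (hc0 y) (hrle y σ)) hcs)
    rw [hcomm]
    rw [← hc1]
    exact tsum_congr fun y => by rw [tsum_mul_left, hr1 y, mul_one]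
  obtain ⟨hps', htp⟩ := mix_sum a ha0 has ha1
  obtain ⟨hqs', htq⟩ := mix_sum b hb0 hbs hb1
  have hps : Summable p := hps'.congr fun σ => (hp σ).symm
  have hqs : Summable q := hqs'.congr fun σ => (hq σ).symm
  have htp1 : ∑' σ, p σ = 1 := by rw [tsum_congr hp]; exact htp
  have htq1 : ∑' σ, q σ = 1 := by rw [tsum_congr hq]; exact htq
  -- the "square-root mixtures"
  set A : S → ℝ := fun σ => ∑' y, a y * Real.sqrt (r y σ) with hA
  set B : S → ℝ := fun σ => ∑' y, b y * Real.sqrt (r y σ) with hB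
  have hAsum : ∀ σ, Summable fun y => a y * Real.sqrt (r y σ) := fun σ =>
    Summable.of_nonneg_of_le (fun y => mul_nonneg (ha0 y) (Real.sqrt_nonneg _))
      (fun y => mul_le_of_le_one_right (ha0 y) (hsrle y σ)) has
  have hBsum : ∀ σ, Summable fun y => b y * Real.sqrt (r y σ) := fun σ =>
    Summable.of_nonneg_of_le (fun y => mul_nonneg (hb0 y) (Real.sqrt_nonneg _))
      (fun y => mul_le_of_le_one_right (hb0 y) (hsrle y σ)) hbs
  have hA0 : ∀ σ, 0 ≤ A σ := fun σ =>
    tsum_nonneg fun y => mul_nonneg (ha0 y) (Real.sqrt_nonneg _)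
  have hB0 : ∀ σ, 0 ≤ B σ := fun σ =>
    tsum_nonneg fun y => mul_nonneg (hb0 y) (Real.sqrt_nonneg _)
  -- Cauchy–Schwarz: A σ ≤ √(p σ), B σ ≤ √(q σ)
  have key : ∀ (c : Y → ℝ), (∀ y, 0 ≤ c y) → Summable c → (∑' y, c y = 1) →
      ∀ σ, (∑' y, c y * Real.sqrt (r y σ)) ≤ Real.sqrt (∑' y, c y * r y σ) := by
    intro c hc0 hcs hc1 σ
    have hsum : Summable fun y => c y * Real.sqrt (r y σ) :=
      Summable.of_nonneg_of_le (fun y => mul_nonneg (hc0 y) (Real.sqrt_nonneg _))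
        (fun y => mul_le_of_le_one_right (hc0 y) (hsrle y σ)) hcs
    refine Summable.tsum_le_of_sum_le hsum fun F => ?_
    refine Real.le_sqrt_of_sq_le ?_
    have cs := Finset.sum_mul_sq_le_sq_mul_sq F (fun y => Real.sqrt (c y))
      (fun y => Real.sqrt (c y * r y σ))
    have e1 : ∀ y ∈ F, Real.sqrt (c y) * Real.sqrt (c y * r y σ)
        = c y * Real.sqrt (r y σ) := by
      intro y _
      rw [Real.sqrt_mul (hc0 y), ← mul_assoc, Real.mul_self_sqrt (hc0 y)]
    have e2 : ∀ y ∈ F, Real.sqrt (c y) ^ 2 = c y := fun y _ => Real.sq_sqrt (hc0 y)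
    have e3 : ∀ y ∈ F, Real.sqrt (c y * r y σ) ^ 2 = c y * r y σ := fun y _ =>
      Real.sq_sqrt (mul_nonneg (hc0 y) (hr0 y σ))
    rw [Finset.sum_congr rfl e1, Finset.sum_congr rfl e2, Finset.sum_congr rfl e3] at cs
    have h1 : (∑ y ∈ F, c y) ≤ 1 := by
      rw [← hc1]; exact Summable.sum_le_tsum F (fun y _ => hc0 y) hcs
    have h2 : (∑ y ∈ F, c y * r y σ) ≤ ∑' y, c y * r y σ :=
      Summable.sum_le_tsum F (fun y _ => mul_nonneg (hc0 y) (hr0 y σ))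
        (Summable.of_nonneg_of_le (fun y => mul_nonneg (hc0 y) (hr0 y σ))
          (fun y => mul_le_of_le_one_right (hc0 y) (hrle y σ)) hcs)
    have h3 : (0:ℝ) ≤ ∑ y ∈ F, c y * r y σ :=
      Finset.sum_nonneg fun y _ => mul_nonneg (hc0 y) (hr0 y σ)
    nlinarith
  have hAle : ∀ σ, A σ ≤ Real.sqrt (p σ) := fun σ => by
    rw [hp σ]; exact key a ha0 has ha1 σ
  have hBle : ∀ σ, B σ ≤ Real.sqrt (q σ) := fun σ => by
    rw [hq σ]; exact key b hb0 hbs hb1 σ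
  -- pairwise affinities
  set H : Y × Y → ℝ := fun z => ∑' σ, Real.sqrt (r z.1 σ) * Real.sqrt (r z.2 σ) with hHdef
  have hHs : ∀ z : Y × Y, Summable fun σ => Real.sqrt (r z.1 σ) * Real.sqrt (r z.2 σ) :=
    fun z => (expand_hell (r z.1) (r z.2) (hr0 z.1) (hr0 z.2) (hrs z.1) (hrs z.2)).1
  have hHlb : ∀ z : Y × Y, 1 - C / 2 ≤ H z := by
    intro z
    have hexp := (expand_hell (r z.1) (r z.2) (hr0 z.1) (hr0 z.2) (hrs z.1) (hrs z.2)).2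
    have := hC z.1 z.2
    rw [hexp, hr1 z.1, hr1 z.2] at this
    simp only [hHdef]
    linarith
  have hHub : ∀ z : Y × Y, H z ≤ 1 := by
    intro z
    have h1 : H z ≤ ∑' σ, (r z.1 σ + r z.2 σ) / 2 :=
      Summable.tsum_le_tsum (fun σ => sqq_le (hr0 z.1 σ) (hr0 z.2 σ)) (hHs z)
        (((hrs z.1).add (hrs z.2)).div_const 2)
    have h2 : (∑' σ, (r z.1 σ + r z.2 σ) / 2) = 1 := by
      rw [tsum_div_const, Summable.tsum_add (hrs z.1) (hrs z.2), hr1 z.1, hr1 z.2]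
      norm_num
    linarith
  have hH0 : ∀ z : Y × Y, 0 ≤ H z := fun z =>
    tsum_nonneg fun σ => mul_nonneg (Real.sqrt_nonneg _) (Real.sqrt_nonneg _)
  -- the big kernel G over (Y × Y) × S
  set G : (Y × Y) × S → ℝ := fun w =>
    (a w.1.1 * b w.1.2) * (Real.sqrt (r w.1.1 w.2) * Real.sqrt (r w.1.2 w.2)) with hGdef
  have hG0 : ∀ w, 0 ≤ G w := fun w => by
    simp only [hGdef]
    exact mul_nonneg (mul_nonneg (ha0 _) (hb0 _))
      (mul_nonneg (Real.sqrt_nonneg _) (Real.sqrt_nonneg _))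
  have habs : Summable (fun z : Y × Y => a z.1 * b z.2) :=
    has.mul_of_nonneg hbs ha0 hb0
  have hGslice : ∀ z : Y × Y, Summable fun σ => G (z, σ) := fun z => by
    simp only [hGdef]
    exact (hHs z).mul_left _
  have hGmarg : ∀ z : Y × Y, (∑' σ, G (z, σ)) = (a z.1 * b z.2) * H z := fun z => by
    simp only [hGdef, hHdef]
    exact tsum_mul_left
  have hGmargs : Summable fun z : Y × Y => ∑' σ, G (z, σ) := by
    refine Summable.of_nonneg_of_le
      (fun z => tsum_nonneg fun σ => hG0 (z, σ)) (fun z => ?_) habs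
    rw [hGmarg z]
    have := hHub z
    nlinarith [mul_nonneg (ha0 z.1) (hb0 z.2), hH0 z]
  have hGs : Summable G :=
    (summable_prod_of_nonneg hG0).2 ⟨hGslice, hGmargs⟩
  -- lower bound for ∑' G
  have habs1 : (∑' z : Y × Y, a z.1 * b z.2) = 1 := by
    have hna : Summable fun y => ‖a y‖ := by
      simpa [Real.norm_eq_abs, abs_of_nonneg (ha0 _)] using has
    have hnb : Summable fun y => ‖b y‖ := by
      simpa [Real.norm_eq_abs, abs_of_nonneg (hb0 _)] using hbs
    rw [← tsum_mul_tsum_of_summable_norm hna hnb, ha1, hb1, mul_one]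
  have hGlow : 1 - C / 2 ≤ ∑' w, G w := by
    rw [Summable.tsum_prod' hGs hGslice]
    have step : ∀ z : Y × Y, (a z.1 * b z.2) * (1 - C / 2) ≤ ∑' σ, G (z, σ) := by
      intro z
      rw [hGmarg z]
      exact mul_le_mul_of_nonneg_left (hHlb z) (mul_nonneg (ha0 z.1) (hb0 z.2))
    calc (1 : ℝ) - C / 2 = (∑' z : Y × Y, a z.1 * b z.2) * (1 - C / 2) := by
          rw [habs1, one_mul]
      _ = ∑' z : Y × Y, (a z.1 * b z.2) * (1 - C / 2) := (tsum_mul_right).symm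
      _ ≤ ∑' (z : Y × Y), ∑' σ, G (z, σ) :=
          Summable.tsum_le_tsum step (habs.mul_right _) hGmargs
  -- upper bound: ∑' G ≤ ∑' √p √q
  have hGswap : Summable fun w : S × (Y × Y) => G (w.2, w.1) := hGs.prod_symm
  have hGsliceS : ∀ σ, Summable fun z : Y × Y => G (z, σ) := fun σ =>
    (summable_prod_of_nonneg (fun w : S × (Y × Y) => hG0 (w.2, w.1))).1 hGswap |>.1 σ
  have hGmargS : Summable fun σ => ∑' z : Y × Y, G (z, σ) :=
    ((summable_prod_of_nonneg (fun w : S × (Y × Y) => hG0 (w.2, w.1))).1 hGswap).2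
  have hGsum_eq : (∑' w, G w) = ∑' σ, ∑' z : Y × Y, G (z, σ) := by
    rw [← (Equiv.prodComm S (Y × Y)).tsum_eq G]
    exact Summable.tsum_prod' hGswap hGsliceS
  have hzAB : ∀ σ, (∑' z : Y × Y, G (z, σ)) = A σ * B σ := by
    intro σ
    have hna : Summable fun y => ‖a y * Real.sqrt (r y σ)‖ :=
      (hAsum σ).congr fun y => by
        rw [Real.norm_eq_abs, abs_of_nonneg (mul_nonneg (ha0 y) (Real.sqrt_nonneg _))]
    have hnb : Summable fun y => ‖b y * Real.sqrt (r y σ)‖ :=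
      (hBsum σ).congr fun y => by
        rw [Real.norm_eq_abs, abs_of_nonneg (mul_nonneg (hb0 y) (Real.sqrt_nonneg _))]
    rw [hA, hB]
    rw [tsum_mul_tsum_of_summable_norm hna hnb]
    exact (tsum_congr fun z => by simp only [hGdef]; ring).symm
  obtain ⟨hpqmul, hpqexp⟩ := expand_hell p q hp0 hq0 hps hqs
  have hABle : ∀ σ, (∑' z : Y × Y, G (z, σ)) ≤ Real.sqrt (p σ) * Real.sqrt (q σ) := by
    intro σ
    rw [hzAB σ]
    have h1 := hAle σ; have h2 := hBle σ
    nlinarith [hA0 σ, hB0 σ, Real.sqrt_nonneg (p σ), Real.sqrt_nonneg (q σ)]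
  have hGhigh : (∑' w, G w) ≤ ∑' σ, Real.sqrt (p σ) * Real.sqrt (q σ) := by
    rw [hGsum_eq]
    exact Summable.tsum_le_tsum hABle hGmargS hpqmul
  -- conclude
  rw [hpqexp, htp1, htq1]
  linarith
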